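/- Let a be a critical element for a symmetric matrix A with similarity layers X_0, ..., X_k rooted at a covering V. If there exist x ∈ X_i and distinct y, z ∈ X_j with i < j and A[x,y] = A[x,z] > A[y,z], then {a, y, z} is a weighted asteroidal triple of A. -/

import Mathlib

/-- The consecutive pairs of `l` avoid `z` with respect to the matrix `A`. -/
def AvoidChain {V : Type*} (A : V → V → ℝ) (z : V) (l : List V) : Prop :=
  l.Chain' fun u w => min (A u z) (A w z) < A u w

/-- `l` is a path from `x` to `y` avoiding `z` in `A`: a sequence of distinct
elements starting at `x`, ending at `y`, each consecutive pair avoiding `z`. -/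
def AvoidPath {V : Type*} (A : V → V → ℝ) (z x y : V) (l : List V) : Prop :=
  l.Nodup ∧ l.head? = some x ∧ l.getLast? = some y ∧ AvoidChain A z l

/-- `x ~^z y`: there is a path from `x` to `y` avoiding `z` in `A`. -/
def Avoids {V : Type*} (A : V → V → ℝ) (z x y : V) : Prop :=
  ∃ l, AvoidPath A z x y l

/-- `{x,y,z}` is a weighted asteroidal triple of `A`. -/
def IsWAT {V : Type*} (A : V → V → ℝ) (x y z : V) : Prop :=
  x ≠ y ∧ y ≠ z ∧ x ≠ z ∧ Avoids A z x y ∧ Avoids A x y z ∧ Avoids A y z x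

/-- `π` is a Robinson ordering of `A`. -/
def IsRobinsonOrdering {V : Type*} [Fintype V] (A : V → V → ℝ)
    (π : Fin (Fintype.card V) ≃ V) : Prop :=
  ∀ i j k : Fin (Fintype.card V), i < j → j < k →
    A (π i) (π k) ≤ min (A (π i) (π j)) (A (π j) (π k))

/-- `A` is Robinsonian: it admits a Robinson ordering. -/
def Robinsonian {V : Type*} [Fintype V] (A : V → V → ℝ) : Prop :=
  ∃ π : Fin (Fintype.card V) ≃ V, IsRobinsonOrdering A π

/-- `S` is strongly homogeneous for `A`. -/
def StronglyHomogeneous {V : Type*} [DecidableEq V] (A : V → V → ℝ) (S : Finset V) : Prop :=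
  ∀ x ∉ S, ∀ y ∈ S, ∀ z ∈ S, A x y = A x z ∧ A x y ≤ A y z

/-- `a` is critical for `A`: between any two distinct elements of `V \ {a}`
there is a path avoiding `a`. -/
def IsCritical {V : Type*} (A : V → V → ℝ) (a : V) : Prop :=
  ∀ x y : V, x ≠ a → y ≠ a → x ≠ y → Avoids A a x y

/-- The similarity layers of `A` rooted at `a`, together with the union of the
layers so far: `(simLayersAux A a n).1` is the `n`-th layer `X_n` and
`(simLayersAux A a n).2 = X_0 ∪ ⋯ ∪ X_n`. -/
def simLayersAux {V : Type*} (A : V → V → ℝ) (a : V) : ℕ → Set V × Set V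
  | 0 => ({a}, {a})
  | n + 1 =>
    let U := (simLayersAux A a n).2
    let L := { y | y ∉ U ∧ ∀ x ∈ U, ∀ z ∉ U, A x z ≤ A x y }
    (L, U ∪ L)

/-- The `n`-th similarity layer `X_n` of `A` rooted at `a`. -/
def simLayer {V : Type*} (A : V → V → ℝ) (a : V) (n : ℕ) : Set V :=
  (simLayersAux A a n).1


section Aux

variable {V : Type*}

/-- Reversing an avoiding path for a symmetric matrix. -/
lemma avoids_symm (A : V → V → ℝ) (hsym : ∀ u v : V, A u v = A v u) {w u v : V}
    (h : Avoids A w u v) : Avoids A w v u := by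
  obtain ⟨l, hnd, hh, hl, hc⟩ := h
  refine ⟨l.reverse, List.nodup_reverse.2 hnd, ?_, ?_, ?_⟩
  · rw [List.head?_reverse]; exact hl
  · rw [List.getLast?_reverse]; exact hh
  · rw [AvoidChain, List.Chain', List.isChain_reverse]
    refine hc.imp ?_
    intro p q hpq
    rw [min_comm, hsym q p]
    exact hpq

lemma mem_U_self (A : V → V → ℝ) (a : V) (n : ℕ) : a ∈ (simLayersAux A a n).2 := by
  induction n with
  | zero => exact rfl
  | succ n ih => exact Or.inl ih

lemma U_mono (A : V → V → ℝ) (a : V) {s t : ℕ} (hst : s ≤ t) :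
    (simLayersAux A a s).2 ⊆ (simLayersAux A a t).2 := by
  induction hst with
  | refl => exact fun _ h => h
  | step _ ih => exact fun v hv => Or.inl (ih hv)

lemma layer_subset_U (A : V → V → ℝ) (a : V) (n : ℕ) :
    simLayer A a n ⊆ (simLayersAux A a n).2 := by
  cases n with
  | zero => exact fun _ h => h
  | succ n => exact fun v hv => Or.inr hv

lemma mem_layer_succ {A : V → V → ℝ} {a : V} {n : ℕ} {v : V} :
    v ∈ simLayer A a (n+1) ↔
      v ∉ (simLayersAux A a n).2 ∧
        ∀ x ∈ (simLayersAux A a n).2, ∀ z ∉ (simLayersAux A a n).2, A x z ≤ A x v :=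
  Iff.rfl

lemma mem_U_succ {A : V → V → ℝ} {a : V} {n : ℕ} {v : V} :
    v ∈ (simLayersAux A a (n+1)).2 ↔
      v ∈ (simLayersAux A a n).2 ∨ v ∈ simLayer A a (n+1) :=
  Iff.rfl

/-- Key lemma: if `z` lies outside `U_m`, then from `a` one can reach any
element of `U_t` (`t ≤ m`) by a path inside `U_t` avoiding `z`. -/
lemma reach_in_U (A : V → V → ℝ) (a : V) (m : ℕ) (z : V)
    (hz : z ∉ (simLayersAux A a m).2) :
    ∀ t, t ≤ m → ∀ v ∈ (simLayersAux A a t).2,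
      ∃ l, AvoidPath A z a v l ∧ ∀ w ∈ l, w ∈ (simLayersAux A a t).2 := by
  intro t
  induction t with
  | zero =>
    intro _ v hv
    rcases hv with rfl
    exact ⟨[v], ⟨List.nodup_singleton v, rfl, rfl, List.isChain_singleton v⟩,
      fun w hw => by rw [List.mem_singleton.1 hw]; exact mem_U_self A v 0⟩
  | succ t ih =>
    intro ht v hv
    have ht' : t ≤ m := Nat.le_of_succ_le ht
    rcases mem_U_succ.1 hv with hvU | hvL
    · obtain ⟨l, hp, hsub⟩ := ih ht' v hvU
      exact ⟨l, hp, fun w hw => Or.inl (hsub w hw)⟩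
    · obtain ⟨hvU, hvprop⟩ := mem_layer_succ.1 hvL
      by_cases hcase : ∃ u ∈ (simLayersAux A a t).2, A u z < A u v
      · obtain ⟨u, huU, hlt⟩ := hcase
        obtain ⟨l, ⟨hnd, hh, hl, hc⟩, hsub⟩ := ih ht' u huU
        refine ⟨l ++ [v], ⟨?_, ?_, ?_, ?_⟩, ?_⟩
        · refine List.nodup_append.2 ⟨hnd, List.nodup_singleton v, ?_⟩
          intro w hw _ hw' rfl
          rcases List.mem_singleton.1 hw' with rfl
          exact hvU (hsub w hw)
        · cases l with
          | nil => simp at hh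
          | cons p l' => simpa using hh
        · rw [List.getLast?_append]; rfl
        · refine List.isChain_append.2 ⟨hc, List.isChain_singleton v, ?_⟩
          intro p hp q hq
          rw [hl] at hp
          rcases Option.mem_some_iff.1 hp with rfl
          rcases Option.mem_some_iff.1 hq with rfl
          exact lt_of_le_of_lt (min_le_left _ _) hlt
        · intro w hw
          rcases List.mem_append.1 hw with hw | hw
          · exact Or.inl (hsub w hw)
          · rcases List.mem_singleton.1 hw with rfl
            exact Or.inr hvL
      · push_neg at hcase
        exfalso
        have hzU : z ∉ (simLayersAux A a t).2 := fun h => hz (U_mono A a ht' h)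
        have hzL : z ∈ simLayer A a (t+1) := by
          refine mem_layer_succ.2 ⟨hzU, ?_⟩
          intro p hp w hw
          calc A p w ≤ A p v := hvprop p hp w hw
            _ ≤ A p z := hcase p hp
        exact hz (U_mono A a ht (layer_subset_U A a (t+1) hzL))

/-- From `a` one can reach `y` avoiding `z` whenever `x ∈ U_m`, `y, z ∉ U_m`
and `min (A x z) (A y z) < A x y`. -/
lemma reach_outside (A : V → V → ℝ) (a : V) (m : ℕ) (x y z : V)
    (hxU : x ∈ (simLayersAux A a m).2)
    (hyU : y ∉ (simLayersAux A a m).2) (hzU : z ∉ (simLayersAux A a m).2)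
    (hlt : min (A x z) (A y z) < A x y) : Avoids A z a y := by
  obtain ⟨l, ⟨hnd, hh, hl, hc⟩, hsub⟩ := reach_in_U A a m z hzU m le_rfl x hxU
  refine ⟨l ++ [y], ?_, ?_, ?_, ?_⟩
  · refine List.nodup_append.2 ⟨hnd, List.nodup_singleton y, ?_⟩
    intro w hw _ hw' rfl
    rcases List.mem_singleton.1 hw' with rfl
    exact hyU (hsub w hw)
  · cases l with
    | nil => simp at hh
    | cons p l' => simpa using hh
  · rw [List.getLast?_append]; rfl
  · refine List.isChain_append.2 ⟨hc, List.isChain_singleton y, ?_⟩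
    intro p hp q hq
    rw [hl] at hp
    rcases Option.mem_some_iff.1 hp with rfl
    rcases Option.mem_some_iff.1 hq with rfl
    exact hlt

end Aux

theorem stmt_13 {V : Type*} (A : V → V → ℝ)
    (hsym : ∀ u v : V, A u v = A v u)
    (a : V) (ha : IsCritical A a) (k : ℕ)
    (hcov : ∀ v : V, ∃ i ≤ k, v ∈ simLayer A a i)
    (i j : ℕ) (hij : i < j) (x y z : V)
    (hx : x ∈ simLayer A a i) (hy : y ∈ simLayer A a j) (hz : z ∈ simLayer A a j)
    (hyz : y ≠ z)
    (h1 : A x y = A x z) (h2 : A x z > A y z) :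
    IsWAT A a y z := by
  obtain ⟨m, rfl⟩ : ∃ m, j = m + 1 := ⟨j - 1, (Nat.succ_pred_eq_of_pos (Nat.lt_of_le_of_lt (Nat.zero_le i) hij)).symm⟩
  have him : i ≤ m := Nat.lt_succ_iff.1 hij
  have hyU : y ∉ (simLayersAux A a m).2 := (mem_layer_succ.1 hy).1
  have hzU : z ∉ (simLayersAux A a m).2 := (mem_layer_succ.1 hz).1
  have hxU : x ∈ (simLayersAux A a m).2 :=
    U_mono A a him (layer_subset_U A a i hx)
  have haU : a ∈ (simLayersAux A a m).2 := mem_U_self A a m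
  have hay : a ≠ y := fun h => hyU (h ▸ haU)
  have haz : a ≠ z := fun h => hzU (h ▸ haU)
  refine ⟨hay, hyz, haz, ?_, ?_, ?_⟩
  · -- path a → y avoiding z
    refine reach_outside A a m x y z hxU hyU hzU ?_
    rw [h1]
    exact lt_of_le_of_lt (min_le_right _ _) h2
  · exact ha y z (fun h => hay h.symm) (fun h => haz h.symm) hyz
  · -- path z → a avoiding y, as reverse of a → z avoiding y
    refine avoids_symm A hsym (reach_outside A a m x z y hxU hzU hyU ?_)
    rw [hsym z y, ← h1]
    exact lt_of_le_of_lt (min_le_right _ _) (h1 ▸ h2)
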